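/- Let H be a complex Hilbert space with dim H ≥ 3 and let φ : B_s(H) → B_s(H) be a surjective map such that for all A, B, C ∈ B_s(H), A − B ↔_c C if and only if φ(A) − φ(B) ↔_c φ(C). Then for every nonempty subset M ⊆ B_s(H), φ(M^{cc}) = φ(M)^{cc} and φ⁻¹(φ(M^{cc})) = M^{cc}. -/
import Mathlib


noncomputable section

variable {H : Type*} [NormedAddCommGroup H] [InnerProductSpace ℂ H] [CompleteSpace H]

/-- `A ↔_c B`: the self-adjoint operators `A` and `B` commute. -/
def CommC (A B : selfAdjoint (H →L[ℂ] H)) : Prop :=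
  (A : H →L[ℂ] H) * (B : H →L[ℂ] H) = (B : H →L[ℂ] H) * (A : H →L[ℂ] H)

/-- `M^c`: the set of self-adjoint operators commuting with every member of `M`. -/
def CSet (M : Set (selfAdjoint (H →L[ℂ] H))) : Set (selfAdjoint (H →L[ℂ] H)) :=
  {X | ∀ T ∈ M, CommC X T}

/-- `M^{cc} = (M^c)^c`. -/
def CCSet (M : Set (selfAdjoint (H →L[ℂ] H))) : Set (selfAdjoint (H →L[ℂ] H)) :=
  CSet (CSet M)

theorem stmt15
    (hdim : 3 ≤ Module.rank ℂ H)
    (φ : selfAdjoint (H →L[ℂ] H) → selfAdjoint (H →L[ℂ] H))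
    (hsurj : Function.Surjective φ)
    (hpres : ∀ A B C : selfAdjoint (H →L[ℂ] H),
      CommC (A - B) C ↔ CommC (φ A - φ B) (φ C)) :
    ∀ M : Set (selfAdjoint (H →L[ℂ] H)), M.Nonempty →
      φ '' (CCSet M) = CCSet (φ '' M) ∧
      φ ⁻¹' (φ '' (CCSet M)) = CCSet M := by
  -- Step 1: φ 0 commutes with every φ C.
  have hc0 : ∀ C : selfAdjoint (H →L[ℂ] H),
      (φ 0 : H →L[ℂ] H) * (φ C : H →L[ℂ] H) = (φ C : H →L[ℂ] H) * (φ 0 : H →L[ℂ] H) := by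
    intro C
    have h := (hpres C 0 C).mp (by simp [CommC])
    simp only [CommC, AddSubgroupClass.coe_sub, sub_mul, mul_sub] at h
    exact sub_right_injective h
  -- Step 2: φ preserves commutation in both directions.
  have hcomm : ∀ A C : selfAdjoint (H →L[ℂ] H), CommC A C ↔ CommC (φ A) (φ C) := by
    intro A C
    have h := hpres A 0 C
    rw [sub_zero] at h
    rw [h]
    simp only [CommC, AddSubgroupClass.coe_sub, sub_mul, mul_sub, hc0 C, sub_left_inj]
  -- Step 3: CSet intertwines with φ.
  have hCSet : ∀ M : Set (selfAdjoint (H →L[ℂ] H)), CSet (φ '' M) = φ '' (CSet M) := by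
    intro M
    ext X
    obtain ⟨Y, rfl⟩ := hsurj X
    constructor
    · intro hX
      exact ⟨Y, fun T hT => (hcomm Y T).mpr (hX (φ T) ⟨T, hT, rfl⟩), rfl⟩
    · rintro ⟨Z, hZ, hZY⟩
      rintro _ ⟨T, hT, rfl⟩
      rw [← hZY]
      exact (hcomm Z T).mp (hZ T hT)
  intro M _
  have h1 : φ '' CCSet M = CCSet (φ '' M) := by
    unfold CCSet
    rw [hCSet, hCSet]
  refine ⟨h1, ?_⟩
  ext X
  simp only [Set.mem_preimage]
  constructor
  · intro hX
    rw [h1] at hX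
    intro T hT
    have hφT : φ T ∈ CSet (φ '' M) := by
      rw [hCSet]
      exact ⟨T, hT, rfl⟩
    exact (hcomm X T).mpr (hX (φ T) hφT)
  · exact fun hX => Set.mem_image_of_mem φ hX
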